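/- For λ, γ > 0 and a fixed vector y ∈ ℝ^m, the minimum of (λ/2)‖A‖_F² + (γ/2)‖x‖₂² over all matrices A ∈ ℝ^{m×n} and vectors x ∈ ℝ^n satisfying A x = y equals √(λγ)·‖y‖₂. -/

import Mathlib

open Matrix

/-- For `λ, γ > 0` and fixed `y ∈ ℝ^m`, the minimum of
`(λ/2)‖A‖_F² + (γ/2)‖x‖₂²` over `A ∈ ℝ^{m×n}`, `x ∈ ℝ^n` with `A x = y`
equals `√(λγ)·‖y‖₂`. -/
theorem min_regularized_factorization {m n : ℕ} (hn : 0 < n)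
    (l g : ℝ) (hl : 0 < l) (hg : 0 < g) (y : Fin m → ℝ) :
    IsLeast
      {r : ℝ | ∃ (A : Matrix (Fin m) (Fin n) ℝ) (x : Fin n → ℝ),
        A.mulVec x = y ∧
        r = l / 2 * (∑ i, ∑ j, A i j ^ 2) + g / 2 * (∑ j, x j ^ 2)}
      (Real.sqrt (l * g) * Real.sqrt (∑ i, y i ^ 2)) := by
  set S := ∑ i, y i ^ 2 with hSdef
  have hS0 : 0 ≤ S := Finset.sum_nonneg fun i _ => sq_nonneg _
  constructor
  · -- membership
    by_cases hS : S = 0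
    · refine ⟨0, 0, ?_, ?_⟩
      · funext i
        have hy : y i = 0 := by
          have h := (Finset.sum_eq_zero_iff_of_nonneg
            (fun i _ => sq_nonneg (y i))).mp hS i (Finset.mem_univ i)
          nlinarith [sq_nonneg (y i)]
        simp [Matrix.mulVec, hy]
      · simp [hS]
    · have hSpos : 0 < S := lt_of_le_of_ne hS0 (Ne.symm hS)
      set t := Real.sqrt (l * S / g) with htdef
      have ht : 0 < t := Real.sqrt_pos.mpr (by positivity)
      have ht2 : t ^ 2 = l * S / g := Real.sq_sqrt (by positivity)
      have h1 : g * t ^ 2 = l * S := by rw [ht2]; field_simp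
      set c := Real.sqrt t with hcdef
      have hc : 0 < c := Real.sqrt_pos.mpr ht
      have hc2 : c ^ 2 = t := Real.sq_sqrt ht.le
      set j0 : Fin n := ⟨0, hn⟩ with hj0
      refine ⟨Matrix.of (fun i j => if j = j0 then y i / c else 0),
        (fun j => if j = j0 then c else 0), ?_, ?_⟩
      · funext i
        simp only [Matrix.mulVec, dotProduct, Matrix.of_apply]
        rw [Finset.sum_eq_single_of_mem j0 (Finset.mem_univ j0)
          (fun b _ hb => by simp [hb])]
        simp [div_mul_cancel₀ _ hc.ne']
      · have hx : (∑ j, (if j = j0 then c else 0) ^ 2) = t := by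
          rw [Finset.sum_eq_single_of_mem j0 (Finset.mem_univ j0)
            (fun b _ hb => by simp [hb])]
          simp [hc2]
        have hA : (∑ i, ∑ j, (Matrix.of (fun i j => if j = j0 then y i / c else 0)) i j ^ 2)
            = S / t := by
          have hrow : ∀ i : Fin m,
              (∑ j, (if j = j0 then y i / c else 0) ^ 2) = y i ^ 2 / t := by
            intro i
            rw [Finset.sum_eq_single_of_mem j0 (Finset.mem_univ j0)
              (fun b _ hb => by simp [hb])]
            simp [div_pow, hc2]
          simp only [Matrix.of_apply]
          rw [Finset.sum_congr rfl (fun i _ => hrow i), ← Finset.sum_div]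
        rw [hx, hA]
        -- show √(lg)·√S = l/2 * (S/t) + g/2 * t
        set v := Real.sqrt (l * g) with hvdef
        set w := Real.sqrt S with hwdef
        have hv2 : v ^ 2 = l * g := Real.sq_sqrt (by positivity)
        have hw2 : w ^ 2 = S := Real.sq_sqrt hS0
        have hsq : (v * w * t) ^ 2 = (l * S) ^ 2 := by
          linear_combination (w ^ 2 * t ^ 2) * hv2 + (l * g * t ^ 2) * hw2 + (l * S) * h1
        have key : v * w * t = l * S := by
          have h3 : v * w * t = Real.sqrt ((v * w * t) ^ 2) :=
            (Real.sqrt_sq (by positivity)).symm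
          rw [h3, hsq, Real.sqrt_sq (by positivity)]
        rw [show l / 2 * (S / t) + g / 2 * t = (l * S + g * t ^ 2) / (2 * t) from by
          field_simp]
        rw [eq_div_iff (by positivity : (2 : ℝ) * t ≠ 0)]
        linear_combination 2 * key - h1
      -- fallthrough shouldn't happen
  · -- lower bound
    rintro r ⟨A, x, hAx, rfl⟩
    set SA := ∑ i, ∑ j, A i j ^ 2 with hSA
    set Sx := ∑ j, x j ^ 2 with hSx
    have hSA0 : 0 ≤ SA := Finset.sum_nonneg fun i _ => Finset.sum_nonneg fun j _ => sq_nonneg _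
    have hSx0 : 0 ≤ Sx := Finset.sum_nonneg fun j _ => sq_nonneg _
    have hCS : S ≤ SA * Sx := by
      have hrow : ∀ i : Fin m, y i ^ 2 ≤ (∑ j, A i j ^ 2) * Sx := by
        intro i
        have := Finset.sum_mul_sq_le_sq_mul_sq Finset.univ (fun j => A i j) (fun j => x j)
        have hy : y i = ∑ j, A i j * x j := by
          rw [← hAx]; simp [Matrix.mulVec, dotProduct]
        rw [hy]; exact this
      calc S = ∑ i, y i ^ 2 := rfl
        _ ≤ ∑ i, (∑ j, A i j ^ 2) * Sx := Finset.sum_le_sum fun i _ => hrow i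
        _ = SA * Sx := by rw [← Finset.sum_mul]
    set p := Real.sqrt l
    set q := Real.sqrt g
    set a := Real.sqrt SA
    set b := Real.sqrt Sx
    set w := Real.sqrt S
    have hp2 : p ^ 2 = l := Real.sq_sqrt hl.le
    have hq2 : q ^ 2 = g := Real.sq_sqrt hg.le
    have ha2 : a ^ 2 = SA := Real.sq_sqrt hSA0
    have hb2 : b ^ 2 = Sx := Real.sq_sqrt hSx0
    have hw2 : w ^ 2 = S := Real.sq_sqrt hS0
    have hvpq : Real.sqrt (l * g) = p * q := Real.sqrt_mul hl.le g
    have hwab : w ≤ a * b := by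
      have := Real.sqrt_le_sqrt hCS
      rwa [Real.sqrt_mul hSA0] at this
    have hp0 : 0 ≤ p := Real.sqrt_nonneg _
    have hq0 : 0 ≤ q := Real.sqrt_nonneg _
    have ha0 : 0 ≤ a := Real.sqrt_nonneg _
    have hb0 : 0 ≤ b := Real.sqrt_nonneg _
    have hw0 : 0 ≤ w := Real.sqrt_nonneg _
    rw [hvpq]
    have h2 : p * q * w ≤ p * q * (a * b) :=
      mul_le_mul_of_nonneg_left hwab (mul_nonneg hp0 hq0)
    nlinarith [sq_nonneg (p * a - q * b), h2, hp2, hq2, ha2, hb2]
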